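/- Fix natural numbers d, k with 1 ≤ k ≤ d, a nondecreasing sequence of positive integers b_1 ≤ b_2 ≤ … ≤ b_k, and a natural number l with 1 ≤ l ≤ d. Set n := l − (d+1−k) if l > d+1−k and n := 0 otherwise. Then b_1 + ⋯ + b_n (the empty sum 0 when n = 0) is the least element of J_l: it belongs to J_l and every element of J_l is ≥ b_1 + ⋯ + b_n. In particular, the minimum of J_l is 0 if and only if l ≤ d+1−k. -/

import Mathlib

open Finset

lemma filter_val_lt_eq (m n : ℕ) (h : n ≤ m) :
    (Finset.univ.filter (fun i : Fin m => (i : ℕ) < n))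
      = Finset.map (Fin.castLEEmb h) Finset.univ := by
  ext i
  simp only [mem_filter, mem_univ, true_and, mem_map, Fin.castLEEmb_apply]
  constructor
  · intro hi; exact ⟨⟨i.val, hi⟩, by ext; simp⟩
  · rintro ⟨a, rfl⟩; simp

lemma card_filter_val_lt (m n : ℕ) (h : n ≤ m) :
    (Finset.univ.filter (fun i : Fin m => (i : ℕ) < n)).card = n := by
  rw [filter_val_lt_eq m n h, card_map, card_univ, Fintype.card_fin]

lemma sum_mul_ge (k n : ℕ) (hn : n < k) (b : Fin k → ℤ) (hb : Monotone b)
    (hb0 : ∀ i, (0:ℤ) ≤ b i) (a : Fin k → ℝ) (ha0 : ∀ i, 0 ≤ a i) (ha1 : ∀ i, a i ≤ 1)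
    (hs : (n : ℝ) ≤ ∑ i, a i) :
    ((∑ i ∈ Finset.univ.filter (fun i : Fin k => (i : ℕ) < n), b i : ℤ) : ℝ)
      ≤ ∑ i, a i * (b i : ℝ) := by
  rcases Nat.eq_zero_or_pos n with h0 | hpos
  · subst h0
    simp only [Nat.not_lt_zero, filter_false, sum_empty]
    · push_cast
      exact Finset.sum_nonneg fun i _ => mul_nonneg (ha0 i) (by exact_mod_cast hb0 i)
  · set F := Finset.univ.filter (fun i : Fin k => (i : ℕ) < n) with hF
    have hnk : n ≤ k := hn.le
    have hcard : F.card = n := card_filter_val_lt k n hnk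
    set j : Fin k := ⟨n - 1, by omega⟩ with hj
    set t : ℝ := (b j : ℝ) with ht
    have ht0 : 0 ≤ t := by rw [ht]; exact_mod_cast hb0 j
    have h1 : ∀ i ∈ F, (b i : ℝ) + (a i - 1) * t ≤ a i * (b i : ℝ) := by
      intro i hi
      simp only [hF, mem_filter] at hi
      have hbi : (b i : ℝ) ≤ t := by
        rw [ht]; exact_mod_cast hb (show i ≤ j by simp [hj, Fin.le_def]; omega)
      nlinarith [ha1 i, ha0 i]
    have h2 : ∀ i ∈ Finset.univ.filter (fun i : Fin k => ¬ ((i : ℕ) < n)),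
        a i * t ≤ a i * (b i : ℝ) := by
      intro i hi
      simp only [mem_filter] at hi
      have hbi : t ≤ (b i : ℝ) := by
        rw [ht]; exact_mod_cast hb (show j ≤ i by simp [hj, Fin.le_def]; omega)
      exact mul_le_mul_of_nonneg_left hbi (ha0 i)
    have hsplit : ∑ i, a i * (b i : ℝ)
        = ∑ i ∈ F, a i * (b i : ℝ)
          + ∑ i ∈ Finset.univ.filter (fun i : Fin k => ¬ ((i : ℕ) < n)), a i * (b i : ℝ) := by
      rw [hF, Finset.sum_filter_add_sum_filter_not]
    have hS1 : ∑ i ∈ F, ((b i : ℝ) + (a i - 1) * t) ≤ ∑ i ∈ F, a i * (b i : ℝ) :=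
      Finset.sum_le_sum h1
    have hS2 : ∑ i ∈ Finset.univ.filter (fun i : Fin k => ¬ ((i : ℕ) < n)), a i * t
        ≤ ∑ i ∈ Finset.univ.filter (fun i : Fin k => ¬ ((i : ℕ) < n)), a i * (b i : ℝ) :=
      Finset.sum_le_sum h2
    have hs1 : ∑ i ∈ F, ((b i : ℝ) + (a i - 1) * t)
        = (∑ i ∈ F, (b i : ℝ)) + ((∑ i ∈ F, a i) - n) * t := by
      rw [Finset.sum_add_distrib, ← Finset.sum_mul, Finset.sum_sub_distrib, Finset.sum_const,
        hcard]
      push_cast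
      ring
    have hs2 : ∑ i ∈ Finset.univ.filter (fun i : Fin k => ¬ ((i : ℕ) < n)), a i * t
        = (∑ i ∈ Finset.univ.filter (fun i : Fin k => ¬ ((i : ℕ) < n)), a i) * t := by
      rw [← Finset.sum_mul]
    have hsa : (∑ i ∈ F, a i)
        + (∑ i ∈ Finset.univ.filter (fun i : Fin k => ¬ ((i : ℕ) < n)), a i) = ∑ i, a i := by
      rw [hF, Finset.sum_filter_add_sum_filter_not]
    have hcast : ((∑ i ∈ F, b i : ℤ) : ℝ) = ∑ i ∈ F, (b i : ℝ) := by push_cast; rfl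
    rw [hcast, hsplit]
    nlinarith [hS1, hS2, hs1, hs2, hsa, hs, ht0]

def Jl (d k : ℕ) (hk : k ≤ d) (b : Fin k → ℤ) (l : ℕ) : Set ℤ :=
  {j | ∃ c : Fin (d + 1) → ℝ, (∀ i, 0 ≤ c i ∧ c i < 1) ∧ (∑ i, c i) = (l : ℝ) ∧
    j = ⌊∑ i : Fin k, c (Fin.castLE (Nat.le_succ_of_le hk) i) * (b i : ℝ)⌋}

set_option maxHeartbeats 2000000 in
theorem Jl_min (d k : ℕ) (hk1 : 1 ≤ k) (hkd : k ≤ d)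
    (b : Fin k → ℤ) (hb : Monotone b) (hbpos : ∀ i, 1 ≤ b i)
    (l : ℕ) (hl1 : 1 ≤ l) (hld : l ≤ d) :
    (∑ i ∈ Finset.univ.filter (fun i : Fin k => (i : ℕ) < l - (d + 1 - k)), b i)
        ∈ Jl d k hkd b l ∧
    (∀ j ∈ Jl d k hkd b l,
      (∑ i ∈ Finset.univ.filter (fun i : Fin k => (i : ℕ) < l - (d + 1 - k)), b i) ≤ j) ∧
    ((∑ i ∈ Finset.univ.filter (fun i : Fin k => (i : ℕ) < l - (d + 1 - k)), b i) = 0 ↔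
      l ≤ d + 1 - k) := by
  set n := l - (d + 1 - k) with hn
  have hnk : n < k := by omega
  have hb0 : ∀ i, (0:ℤ) ≤ b i := fun i => le_trans zero_le_one (hbpos i)
  refine ⟨?_, ?_, ?_⟩
  · rcases Nat.eq_zero_or_pos n with h0 | hpos
    · -- case l ≤ d + 1 - k : take c = ε on the first k coords, rest uniform
      have hld' : l ≤ d + 1 - k := by omega
      set T : ℤ := ∑ i, b i with hT
      have hkT : (k : ℤ) ≤ T := by
        calc (k : ℤ) = (Finset.univ : Finset (Fin k)).card • (1:ℤ) := by simp
          _ ≤ T := Finset.card_nsmul_le_sum _ _ _ (fun i _ => hbpos i)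
      have hTr : (k : ℝ) ≤ (T : ℝ) := by exact_mod_cast hkT
      have hT1 : (1 : ℝ) ≤ (T : ℝ) := by
        have : (1:ℝ) ≤ (k:ℝ) := by exact_mod_cast hk1
        linarith
      set ε : ℝ := 1 / (2 * (T : ℝ)) with hε
      have hε0 : 0 < ε := by rw [hε]; positivity
      have hεhalf : ε ≤ 1/2 := by
        rw [hε, div_le_div_iff₀ (by linarith) (by norm_num)]
        linarith
      have hkε : (k : ℝ) * ε ≤ 1/2 := by
        rw [hε]
        rw [mul_one_div, div_le_div_iff₀ (by linarith) (by norm_num)]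
        linarith
      set D : ℝ := ((d + 1 - k : ℕ) : ℝ) with hD
      have hDeq : D = (d : ℝ) + 1 - (k : ℝ) := by
        rw [hD]; push_cast [Nat.cast_sub (by omega : k ≤ d + 1)]; ring
      have hDpos : (0:ℝ) < D := by
        rw [hDeq]
        have : (k:ℝ) ≤ (d:ℝ) := by exact_mod_cast hkd
        linarith
      have hlD : (l : ℝ) ≤ D := by rw [hD]; exact_mod_cast hld'
      have hl1' : (1:ℝ) ≤ (l:ℝ) := by exact_mod_cast hl1
      set v : ℝ := ((l : ℝ) - k * ε) / D with hv
      have hv0 : 0 ≤ v := by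
        rw [hv]
        apply div_nonneg _ hDpos.le
        linarith
      have hv1 : v < 1 := by
        rw [hv, div_lt_one hDpos]
        have : 0 < (k:ℝ) * ε := by positivity
        linarith
      refine ⟨fun i => if (i : ℕ) < k then ε else v, ?_, ?_, ?_⟩
      · intro i
        by_cases hik : (i : ℕ) < k <;> simp [hik]
        · exact ⟨hε0.le, by linarith⟩
        · exact ⟨hv0, hv1⟩
      · -- sum = l
        have hsplit := Finset.sum_filter_add_sum_filter_not (Finset.univ : Finset (Fin (d+1)))
          (fun i : Fin (d+1) => (i : ℕ) < k) (fun i => if (i : ℕ) < k then ε else v)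
        have e1 : ∑ i ∈ Finset.univ.filter (fun i : Fin (d+1) => (i : ℕ) < k),
            (if (i : ℕ) < k then ε else v) = (k : ℝ) * ε := by
          rw [Finset.sum_congr rfl (fun i hi => if_pos (by simpa using hi)),
            Finset.sum_const, card_filter_val_lt (d+1) k (by omega), nsmul_eq_mul]
        have e2 : ∑ i ∈ Finset.univ.filter (fun i : Fin (d+1) => ¬ ((i : ℕ) < k)),
            (if (i : ℕ) < k then ε else v) = D * v := by
          rw [Finset.sum_congr rfl (fun i hi => if_neg (by simpa using hi)),
            Finset.sum_const, nsmul_eq_mul]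
          congr 1
          have hcardc : (Finset.univ.filter (fun i : Fin (d+1) => ¬ ((i : ℕ) < k))).card
              = d + 1 - k := by
            have := Finset.card_filter_add_card_filter_not
              (s := (Finset.univ : Finset (Fin (d+1)))) (p := fun i : Fin (d+1) => (i : ℕ) < k)
            rw [card_filter_val_lt (d+1) k (by omega)] at this
            simp only [card_univ, Fintype.card_fin] at this
            omega
          rw [hcardc, hD]
        rw [← hsplit, e1, e2, hv, mul_div_cancel₀ _ hDpos.ne']
        ring
      · -- floor value
        have hfilter : Finset.univ.filter (fun i : Fin k => (i : ℕ) < n) = ∅ := by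
          rw [h0]; simp
        rw [hfilter, Finset.sum_empty]
        have hval : ∑ i : Fin k,
            (if ((Fin.castLE (Nat.le_succ_of_le hkd) i : Fin (d+1)) : ℕ) < k then ε else v)
              * (b i : ℝ) = ε * (T : ℝ) := by
          rw [Finset.sum_congr rfl (fun i _ => by
            rw [if_pos (by simpa using i.isLt)])]
          rw [← Finset.mul_sum, hT]
          push_cast
          rfl
        rw [hval]
        have : ε * (T : ℝ) = 1/2 := by
          rw [hε]; field_simp
        rw [this]
        norm_num
    · -- case n ≥ 1
      have hnl : n + (d + 1 - k) = l := by omega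
      set F := Finset.univ.filter (fun i : Fin k => (i : ℕ) < n) with hF
      set Fc := Finset.univ.filter (fun i : Fin k => ¬ ((i : ℕ) < n)) with hFc
      have hcardF : F.card = n := card_filter_val_lt k n hnk.le
      set K := k - n with hK
      have hK1 : 1 ≤ K := by omega
      have hcardFc : Fc.card = K := by
        have := Finset.card_filter_add_card_filter_not
          (s := (Finset.univ : Finset (Fin k))) (p := fun i : Fin k => (i : ℕ) < n)
        rw [← hF, ← hFc, hcardF] at this
        simp only [card_univ, Fintype.card_fin] at this
        omega
      set Sr : ℝ := ∑ i ∈ F, (b i : ℝ) with hSr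
      set Tr : ℝ := ∑ i ∈ Fc, (b i : ℝ) with hTr
      have hb1r : ∀ i : Fin k, (1:ℝ) ≤ (b i : ℝ) := fun i => by exact_mod_cast hbpos i
      have hSr0 : 0 ≤ Sr := Finset.sum_nonneg fun i _ => by linarith [hb1r i]
      have hTK : (K : ℝ) ≤ Tr := by
        calc (K : ℝ) = Fc.card • (1:ℝ) := by rw [hcardFc]; simp
          _ ≤ Tr := Finset.card_nsmul_le_sum _ _ _ (fun i _ => hb1r i)
      have hK1r : (1:ℝ) ≤ (K:ℝ) := by exact_mod_cast hK1
      have hTr1 : (1:ℝ) ≤ Tr := le_trans hK1r hTK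
      have hl1r : (1:ℝ) ≤ (l:ℝ) := by exact_mod_cast hl1
      set bn : ℝ := (b ⟨n, hnk⟩ : ℝ) with hbn
      have hbn1 : (1:ℝ) ≤ bn := hb1r _
      have hSr_le : Sr ≤ (n:ℝ) * bn := by
        calc Sr ≤ ∑ _i ∈ F, bn := by
              apply Finset.sum_le_sum
              intro i hi
              simp only [hF, mem_filter] at hi
              rw [hbn]; exact_mod_cast hb (show i ≤ ⟨n, hnk⟩ by simp [Fin.le_def]; omega)
          _ = (n:ℝ) * bn := by rw [Finset.sum_const, hcardF, nsmul_eq_mul]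
      have hKbn : (K:ℝ) * bn ≤ Tr := by
        calc (K:ℝ) * bn = ∑ _i ∈ Fc, bn := by rw [Finset.sum_const, hcardFc, nsmul_eq_mul]
          _ ≤ Tr := by
              apply Finset.sum_le_sum
              intro i hi
              simp only [hFc, mem_filter] at hi
              rw [hbn]; exact_mod_cast hb (show (⟨n, hnk⟩ : Fin k) ≤ i by simp [Fin.le_def]; omega)
      set δ : ℝ := 1 / (2 * Tr) with hδ
      set ε : ℝ := (K:ℝ) * δ / (l:ℝ) with hε
      have hδ0 : 0 < δ := by rw [hδ]; positivity
      have hδhalf : δ ≤ 1/2 := by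
        rw [hδ, div_le_div_iff₀ (by linarith) (by norm_num)]
        linarith
      have hε0 : 0 < ε := by rw [hε]; positivity
      have hεeq : ε = (K:ℝ) / (2 * Tr * (l:ℝ)) := by
        rw [hε, hδ]; ring
      have hεhalf : ε ≤ 1/2 := by
        rw [hεeq, div_le_div_iff₀ (by nlinarith) (by norm_num)]
        nlinarith
      have hlε : (l:ℝ) * ε = (K:ℝ) * δ := by
        rw [hε]; field_simp
      set g : ℕ → ℝ := fun j => if j < n then 1 - ε else if j < k then δ else 1 - ε with hg
      have hgval : ∀ j, g j = 1 - ε ∨ g j = δ := by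
        intro j
        simp only [hg]
        by_cases h1 : j < n
        · left; rw [if_pos h1]
        · by_cases h2 : j < k
          · right; rw [if_neg h1, if_pos h2]
          · left; rw [if_neg h1, if_neg h2]
      have hgmem : ∀ j, 0 ≤ g j ∧ g j < 1 := by
        intro j
        rcases hgval j with h | h <;> rw [h] <;> constructor <;> linarith
      refine ⟨fun i => g i.val, fun i => hgmem _, ?_, ?_⟩
      · -- total sum = l
        have hrange : ∑ i : Fin (d+1), g i.val = ∑ j ∈ Finset.range (d+1), g j :=
          Fin.sum_univ_eq_sum_range g (d+1)
        have h1 := Finset.sum_range_add_sum_Ico g (show n ≤ k from hnk.le)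
        have h2 := Finset.sum_range_add_sum_Ico g (show k ≤ d+1 by omega)
        have e1 : ∑ j ∈ Finset.range n, g j = (n:ℝ) * (1 - ε) := by
          have hc : ∀ j ∈ Finset.range n, g j = 1 - ε := by
            intro j hj; simp only [hg]; rw [if_pos (Finset.mem_range.mp hj)]
          rw [Finset.sum_congr rfl hc, Finset.sum_const, nsmul_eq_mul, Finset.card_range]
        have e2 : ∑ j ∈ Finset.Ico n k, g j = (K:ℝ) * δ := by
          have hc : ∀ j ∈ Finset.Ico n k, g j = δ := by
            intro j hj
            have := Finset.mem_Ico.mp hj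
            simp only [hg]; rw [if_neg (by omega), if_pos (by omega)]
          rw [Finset.sum_congr rfl hc, Finset.sum_const, nsmul_eq_mul, Nat.card_Ico]
        have e3 : ∑ j ∈ Finset.Ico k (d+1), g j = ((d+1-k : ℕ):ℝ) * (1 - ε) := by
          have hc : ∀ j ∈ Finset.Ico k (d+1), g j = 1 - ε := by
            intro j hj
            have := Finset.mem_Ico.mp hj
            simp only [hg]; rw [if_neg (by omega), if_neg (by omega)]
          rw [Finset.sum_congr rfl hc, Finset.sum_const, nsmul_eq_mul, Nat.card_Ico]
        have hnlr : (n:ℝ) + ((d+1-k : ℕ):ℝ) = (l:ℝ) := by exact_mod_cast congrArg (Nat.cast : ℕ → ℝ) hnl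
        calc ∑ i : Fin (d+1), g i.val
            = (n:ℝ) * (1 - ε) + (K:ℝ) * δ + ((d+1-k : ℕ):ℝ) * (1 - ε) := by
              rw [hrange, ← h2, ← h1, e1, e2, e3]
          _ = ((n:ℝ) + ((d+1-k : ℕ):ℝ)) * (1 - ε) + (l:ℝ) * ε := by rw [hlε]; ring
          _ = (l:ℝ) := by rw [hnlr]; ring
      · -- floor
        have hVeq : ∑ i : Fin k, g ((Fin.castLE (Nat.le_succ_of_le hkd) i : Fin (d+1)) : ℕ)
            * (b i : ℝ) = (1 - ε) * Sr + δ * Tr := by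
          simp only [Fin.coe_castLE]
          rw [← Finset.sum_filter_add_sum_filter_not Finset.univ (fun i : Fin k => (i : ℕ) < n)]
          congr 1
          · have hc : ∀ i ∈ Finset.univ.filter (fun i : Fin k => (i : ℕ) < n),
                g (i : ℕ) * (b i : ℝ) = (1 - ε) * (b i : ℝ) := by
              intro i hi
              simp only [mem_filter] at hi
              have : g (i : ℕ) = 1 - ε := by simp only [hg]; rw [if_pos hi.2]
              rw [this]
            rw [Finset.sum_congr rfl hc, hSr, Finset.mul_sum, hF]
          · have hc : ∀ i ∈ Finset.univ.filter (fun i : Fin k => ¬ ((i : ℕ) < n)),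
                g (i : ℕ) * (b i : ℝ) = δ * (b i : ℝ) := by
              intro i hi
              simp only [mem_filter] at hi
              have : g (i : ℕ) = δ := by simp only [hg]; rw [if_neg hi.2, if_pos i.isLt]
              rw [this]
            rw [Finset.sum_congr rfl hc, hTr, Finset.mul_sum, hFc]
        rw [hVeq]
        have hScast : ((∑ i ∈ F, b i : ℤ) : ℝ) = Sr := by rw [hSr]; push_cast; rfl
        have hδT : δ * Tr = 1/2 := by rw [hδ]; field_simp
        have hnlr : (n:ℝ) ≤ (l:ℝ) := by exact_mod_cast (by omega : n ≤ l)
        clear_value Sr Tr bn δ ε K n F Fc g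
        clear hg hgval hgmem hVeq hδ hε hSr hTr hF hFc hbn hn
        have hn0 : (0:ℝ) ≤ (n:ℝ) := by positivity
        have hK0 : (0:ℝ) ≤ (K:ℝ) := by positivity
        have hTrpos : (0:ℝ) < Tr := by linarith
        have hlpos : (0:ℝ) < (l:ℝ) := by linarith
        have hbn0 : (0:ℝ) ≤ bn := by linarith
        have hchain : (K:ℝ) * Sr ≤ Tr * (l:ℝ) := by
          calc (K:ℝ) * Sr ≤ (K:ℝ) * ((n:ℝ) * bn) := mul_le_mul_of_nonneg_left hSr_le hK0
            _ = (n:ℝ) * ((K:ℝ) * bn) := by ring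
            _ ≤ (n:ℝ) * Tr := mul_le_mul_of_nonneg_left hKbn hn0
            _ ≤ (l:ℝ) * Tr := mul_le_mul_of_nonneg_right hnlr hTrpos.le
            _ = Tr * (l:ℝ) := by ring
        have hεS_le : ε * Sr ≤ 1/2 := by
          have heq2 : ε * Sr = (K:ℝ) * Sr / (2 * Tr * (l:ℝ)) := by rw [hεeq]; ring
          rw [heq2, div_le_iff₀ (by positivity)]
          linarith [hchain]
        have hεS0 : 0 ≤ ε * Sr := mul_nonneg hε0.le hSr0
        refine (Int.floor_eq_iff.mpr ⟨?_, ?_⟩).symm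
        · rw [hScast]; linarith [hδT]
        · rw [hScast]; push_cast; linarith [hδT]
  · -- lower bound
    rintro j ⟨c, hc, hcsum, rfl⟩
    rw [Int.le_floor]
    set a : Fin k → ℝ := fun i => c (Fin.castLE (Nat.le_succ_of_le hkd) i) with ha
    apply sum_mul_ge k n hnk b hb hb0 a (fun i => (hc _).1) (fun i => (hc _).2.le)
    -- (n : ℝ) ≤ ∑ a
    have hfe := filter_val_lt_eq (d+1) k (Nat.le_succ_of_le hkd)
    have hsa : ∑ i ∈ Finset.univ.filter (fun i : Fin (d+1) => (i : ℕ) < k), c i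
        = ∑ i, a i := by
      rw [hfe, Finset.sum_map]; rfl
    have hsplit : ∑ i ∈ Finset.univ.filter (fun i : Fin (d+1) => (i : ℕ) < k), c i
        + ∑ i ∈ Finset.univ.filter (fun i : Fin (d+1) => ¬ ((i : ℕ) < k)), c i
        = ∑ i, c i := Finset.sum_filter_add_sum_filter_not _ _ _
    have hcardc : (Finset.univ.filter (fun i : Fin (d+1) => ¬ ((i : ℕ) < k))).card
        = d + 1 - k := by
      have := Finset.card_filter_add_card_filter_not
        (s := (Finset.univ : Finset (Fin (d+1)))) (p := fun i : Fin (d+1) => (i : ℕ) < k)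
      rw [card_filter_val_lt (d+1) k (Nat.le_succ_of_le hkd)] at this
      simp only [card_univ, Fintype.card_fin] at this
      omega
    have hrest : ∑ i ∈ Finset.univ.filter (fun i : Fin (d+1) => ¬ ((i : ℕ) < k)), c i
        ≤ ((d + 1 - k : ℕ) : ℝ) := by
      calc ∑ i ∈ Finset.univ.filter (fun i : Fin (d+1) => ¬ ((i : ℕ) < k)), c i
          ≤ (Finset.univ.filter (fun i : Fin (d+1) => ¬ ((i : ℕ) < k))).card • (1:ℝ) :=
            Finset.sum_le_card_nsmul _ _ _ (fun i _ => (hc i).2.le)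
        _ = ((d + 1 - k : ℕ) : ℝ) := by rw [hcardc]; simp
    rcases Nat.eq_zero_or_pos n with h0 | hpos
    · rw [h0]
      push_cast
      exact Finset.sum_nonneg fun i _ => (hc _).1
    · have hcast : (n : ℝ) = (l : ℝ) - ((d + 1 - k : ℕ) : ℝ) := by
        have : n + (d + 1 - k) = l := by omega
        push_cast [← this]; ring
      rw [hcast]
      linarith [hsa ▸ hsplit, hcsum]
  · -- iff
    constructor
    · intro hS
      by_contra hlt
      have hpos : 0 < n := by omega
      have : 0 < ∑ i ∈ Finset.univ.filter (fun i : Fin k => (i : ℕ) < n), b i := by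
        apply Finset.sum_pos (fun i _ => lt_of_lt_of_le zero_lt_one (hbpos i))
        exact ⟨⟨0, by omega⟩, by simp [hpos]⟩
      omega
    · intro hle
      have h0 : n = 0 := by omega
      rw [h0]
      simp
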